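/- If H is an induced subgraph of G on vertex set V' ⊆ [p], and M ∈ S^{V'}_{⪰0}(H) is extremal in the cone of PSD matrices on V' vanishing at nonedges of H, then the p×p matrix M̃ obtained from M by padding with zero rows and columns for vertices outside V' is extremal in S^p_{⪰0}(G) and has the same rank as M. Consequently ord(H) ≤ ord(G). -/

import Mathlib

open Matrix BigOperators

/-- The cone of real positive semidefinite matrices with zeros at nonedges of a graph
with adjacency relation `Adj`. -/
def psdCone {n : Type*} [Fintype n] (Adj : n → n → Prop) : Set (Matrix n n ℝ) :=
  {X | X.PosSemidef ∧ ∀ i j, i ≠ j → ¬ Adj i j → X i j = 0}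

/-- `X` lies on an extreme ray of the convex cone `S`: it belongs to `S` and whenever
`X = A + B` with `A, B ∈ S`, both `A` and `B` are nonnegative multiples of `X`. -/
def IsExtremalIn {n : Type*} [Fintype n] (S : Set (Matrix n n ℝ)) (X : Matrix n n ℝ) : Prop :=
  X ∈ S ∧ ∀ A B : Matrix n n ℝ, A ∈ S → B ∈ S → X = A + B →
    (∃ c : ℝ, 0 ≤ c ∧ A = c • X) ∧ (∃ d : ℝ, 0 ≤ d ∧ B = d • X)

/-- The sparsity order of a graph (with adjacency `Adj`): the maximum rank of a matrix
lying on an extreme ray of the cone of PSD matrices vanishing at nonedges. -/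
noncomputable def sparsityOrder {n : Type*} [Fintype n] (Adj : n → n → Prop) : ℕ :=
  sSup {k | ∃ X : Matrix n n ℝ, IsExtremalIn (psdCone Adj) X ∧ X.rank = k}

/-- Pad a matrix indexed by a vertex subset `V` with zero rows and columns. -/
def pad {p : ℕ} (V : Finset (Fin p)) (M : Matrix {x // x ∈ V} {x // x ∈ V} ℝ) :
    Matrix (Fin p) (Fin p) ℝ :=
  fun i j => if hi : i ∈ V then (if hj : j ∈ V then M ⟨i, hi⟩ ⟨j, hj⟩ else 0) else 0

/-! ### Auxiliary lemmas -/

/-- The inclusion matrix of a vertex subset. -/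
def emb {p : ℕ} (V : Finset (Fin p)) : Matrix (Fin p) {x // x ∈ V} ℝ :=
  Matrix.of fun i a => if (a : Fin p) = i then 1 else 0

lemma pad_eq_mul {p : ℕ} (V : Finset (Fin p)) (M : Matrix {x // x ∈ V} {x // x ∈ V} ℝ) :
    pad V M = emb V * M * (emb V)ᵀ := by
  ext i j
  simp only [Matrix.mul_apply, emb, pad, Matrix.transpose_apply, Matrix.of_apply,
    ite_mul, mul_ite, one_mul, mul_one, zero_mul, mul_zero]
  by_cases hi : i ∈ V
  · have hi' : ∀ a : {x // x ∈ V}, ((a : Fin p) = i) = (a = ⟨i, hi⟩) := by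
      intro a; simp [Subtype.ext_iff]
    by_cases hj : j ∈ V
    · have hj' : ∀ a : {x // x ∈ V}, ((a : Fin p) = j) = (a = ⟨j, hj⟩) := by
        intro a; simp [Subtype.ext_iff]
      simp [hi, hj, hi', hj']
    · have hj' : ∀ a : {x // x ∈ V}, ((a : Fin p) = j) = False := by
        intro a; simp; rintro rfl; exact hj a.2
      simp [hi, hj, hi', hj']
  · have hi' : ∀ a : {x // x ∈ V}, ((a : Fin p) = i) = False := by
      intro a; simp; rintro rfl; exact hi a.2
    simp [hi, hi']

lemma emb_tmul {p : ℕ} (V : Finset (Fin p)) : (emb V)ᵀ * emb V = 1 := by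
  ext a b
  simp only [Matrix.mul_apply, emb, Matrix.transpose_apply, Matrix.of_apply, ite_mul, one_mul,
    zero_mul]
  by_cases hab : a = b
  · subst hab; simp [Matrix.one_apply]
  · simp only [Matrix.one_apply_ne hab]
    apply Finset.sum_eq_zero
    intro i _
    by_cases h1 : (a : Fin p) = i
    · by_cases h2 : (b : Fin p) = i
      · exact absurd (Subtype.ext (h1.trans h2.symm)) hab
      · simp [h1, h2]
    · simp [h1]

lemma psd_row_col_zero {n : Type*} [Fintype n] [DecidableEq n] {X : Matrix n n ℝ}
    (hX : X.PosSemidef) {i : n} (h : X i i = 0) (j : n) : X i j = 0 ∧ X j i = 0 := by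
  have h0 : star (Pi.single i (1:ℝ)) ⬝ᵥ X *ᵥ Pi.single i (1:ℝ) = 0 := by
    rw [star_trivial, single_dotProduct, mulVec_single]
    simpa using h
  have h1 := (hX.dotProduct_mulVec_zero_iff (Pi.single i 1)).mp h0
  have hcol : ∀ j, X j i = 0 := by
    intro j
    have := congrFun h1 j
    simpa [mulVec_single] using this
  refine ⟨?_, hcol j⟩
  have hh := hX.1
  rw [Matrix.IsHermitian] at hh
  have := congrFun (congrFun hh i) j
  simp only [conjTranspose_apply, star_trivial] at this
  rw [← this, hcol j]

lemma psd_diag_nonneg {n : Type*} [Fintype n] [DecidableEq n] {X : Matrix n n ℝ}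
    (hX : X.PosSemidef) (i : n) : 0 ≤ X i i := by
  have := hX.dotProduct_mulVec_nonneg (Pi.single i 1)
  rw [star_trivial, single_dotProduct, mulVec_single] at this
  simpa using this

lemma pad_smul {p : ℕ} (V : Finset (Fin p)) (M : Matrix {x // x ∈ V} {x // x ∈ V} ℝ)
    (c : ℝ) : pad V (c • M) = c • pad V M := by
  ext i j
  simp only [pad, Matrix.smul_apply, smul_eq_mul]
  split_ifs <;> simp

lemma pad_submatrix {p : ℕ} (V : Finset (Fin p)) (M : Matrix {x // x ∈ V} {x // x ∈ V} ℝ) :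
    (pad V M).submatrix (Subtype.val : {x // x ∈ V} → Fin p) Subtype.val = M := by
  ext a b
  simp [pad, Matrix.submatrix_apply, a.2, b.2]

lemma pad_rank {p : ℕ} (V : Finset (Fin p)) (M : Matrix {x // x ∈ V} {x // x ∈ V} ℝ) :
    (pad V M).rank = M.rank := by
  have hM : M = (emb V)ᵀ * pad V M * emb V := by
    rw [pad_eq_mul]
    simp only [← Matrix.mul_assoc, emb_tmul, Matrix.one_mul]
    rw [Matrix.mul_assoc, emb_tmul, Matrix.mul_one]
  apply le_antisymm
  · rw [pad_eq_mul]
    exact (Matrix.rank_mul_le_left _ _).trans (Matrix.rank_mul_le_right _ _)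
  · conv_lhs => rw [hM]
    exact (Matrix.rank_mul_le_left _ _).trans (Matrix.rank_mul_le_right _ _)

lemma pad_extremal {p : ℕ} (G : SimpleGraph (Fin p)) (V : Finset (Fin p))
    (M : Matrix {x // x ∈ V} {x // x ∈ V} ℝ)
    (hM : IsExtremalIn (psdCone (fun a b : {x // x ∈ V} => G.Adj a.1 b.1)) M) :
    IsExtremalIn (psdCone G.Adj) (pad V M) := by
  obtain ⟨⟨hpsd, hedge⟩, hext⟩ := hM
  constructor
  · refine ⟨?_, ?_⟩
    · rw [pad_eq_mul]
      have := hpsd.mul_mul_conjTranspose_same (emb V)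
      rwa [conjTranspose_eq_transpose_of_trivial] at this
    · intro i j hij hadj
      simp only [pad]
      split_ifs with hi hj
      · exact hedge ⟨i, hi⟩ ⟨j, hj⟩ (fun h => hij (congrArg Subtype.val h)) hadj
      · rfl
      · rfl
  · intro A B hA hB hsum
    have diag0 : ∀ i : Fin p, i ∉ V → A i i = 0 ∧ B i i = 0 := by
      intro i hi
      have h1 : A i i + B i i = 0 := by
        have := congrFun (congrFun hsum i) i
        simp only [pad, hi, dif_neg, not_false_iff, Matrix.add_apply] at this
        linarith
      have ha := psd_diag_nonneg hA.1 i
      have hb := psd_diag_nonneg hB.1 i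
      constructor <;> linarith
    set A' := A.submatrix (Subtype.val : {x // x ∈ V} → Fin p) Subtype.val with hA'def
    set B' := B.submatrix (Subtype.val : {x // x ∈ V} → Fin p) Subtype.val with hB'def
    have hA'mem : A' ∈ psdCone (fun a b : {x // x ∈ V} => G.Adj a.1 b.1) := by
      refine ⟨hA.1.submatrix _, fun a b hab hadj => ?_⟩
      exact hA.2 a.1 b.1 (fun h => hab (Subtype.ext h)) hadj
    have hB'mem : B' ∈ psdCone (fun a b : {x // x ∈ V} => G.Adj a.1 b.1) := by
      refine ⟨hB.1.submatrix _, fun a b hab hadj => ?_⟩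
      exact hB.2 a.1 b.1 (fun h => hab (Subtype.ext h)) hadj
    have padA : pad V A' = A := by
      ext i j
      simp only [pad, hA'def, Matrix.submatrix_apply]
      split_ifs with hi hj
      · rfl
      · exact ((psd_row_col_zero hA.1 (diag0 j hj).1 i).2).symm
      · exact ((psd_row_col_zero hA.1 (diag0 i hi).1 j).1).symm
    have padB : pad V B' = B := by
      ext i j
      simp only [pad, hB'def, Matrix.submatrix_apply]
      split_ifs with hi hj
      · rfl
      · exact ((psd_row_col_zero hB.1 (diag0 j hj).2 i).2).symm
      · exact ((psd_row_col_zero hB.1 (diag0 i hi).2 j).1).symm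
    have hsum' : M = A' + B' := by
      ext a b
      have := congrFun (congrFun hsum a.1) b.1
      simp only [pad, a.2, b.2, dif_pos, Matrix.add_apply, Subtype.coe_eta] at this
      simpa [hA'def, hB'def] using this
    obtain ⟨⟨c, hc, hAc⟩, ⟨d, hd, hBd⟩⟩ := hext A' B' hA'mem hB'mem hsum'
    refine ⟨⟨c, hc, ?_⟩, ⟨d, hd, ?_⟩⟩
    · rw [← padA, hAc, pad_smul]
    · rw [← padB, hBd, pad_smul]

/-- If `H` is the induced subgraph of `G` on `V' ⊆ [p]` and `M` is extremal in the cone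
of PSD matrices on `V'` vanishing at nonedges of `H`, then the zero-padded matrix `M̃` is
extremal in `S^p_⪰0(G)` of the same rank; consequently `ord(H) ≤ ord(G)`. -/
theorem induced_subgraph_extremal_padding (p : ℕ) (G : SimpleGraph (Fin p))
    (V : Finset (Fin p)) (M : Matrix {x // x ∈ V} {x // x ∈ V} ℝ)
    (hM : IsExtremalIn
      (psdCone (fun a b : {x // x ∈ V} => G.Adj a.1 b.1)) M) :
    IsExtremalIn (psdCone G.Adj) (pad V M) ∧
    (pad V M).rank = M.rank ∧
    sparsityOrder (fun a b : {x // x ∈ V} => G.Adj a.1 b.1) ≤ sparsityOrder G.Adj := by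
  refine ⟨pad_extremal G V M hM, pad_rank V M, ?_⟩
  unfold sparsityOrder
  set SH := {k | ∃ X : Matrix {x // x ∈ V} {x // x ∈ V} ℝ,
    IsExtremalIn (psdCone (fun a b : {x // x ∈ V} => G.Adj a.1 b.1)) X ∧ X.rank = k} with hSH
  set SG := {k | ∃ X : Matrix (Fin p) (Fin p) ℝ,
    IsExtremalIn (psdCone G.Adj) X ∧ X.rank = k} with hSG
  have hsub : SH ⊆ SG := by
    rintro k ⟨X, hX, rfl⟩
    exact ⟨pad V X, pad_extremal G V X hX, pad_rank V X⟩
  rcases Set.eq_empty_or_nonempty SH with h | h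
  · simp [h]
  · refine csSup_le_csSup ⟨p, ?_⟩ h hsub
    rintro k ⟨X, _, rfl⟩
    exact X.rank_le_card_width.trans (by simp)
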